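/- Let $\mu$ be a probability measure on a measurable space $\mathcal{X}$, let $\mathcal{Y}$ be a standard Borel space, and let $\kappa, \eta : \mathcal{X} \rightsquigarrow \mathcal{Y}$ be Markov kernels. Then conditioning increases the Kullback-Leibler divergence: $\mathrm{KL}(\kappa \circ_m \mu, \eta \circ_m \mu) \le \mathrm{KL}(\mu \otimes_m \kappa, \mu \otimes_m \eta)$. -/

import Mathlib

open MeasureTheory ProbabilityTheory
open scoped ENNReal Classical

/-- Kullback-Leibler divergence between two measures: `KL(μ, ν) = ∫ log (dμ/dν) dμ` (a value in
`ℝ≥0∞`) if `μ` is absolutely continuous with respect to `ν` (and the integral is well defined),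
and `∞` otherwise. -/
noncomputable def klDiv {𝓧 : Type*} [MeasurableSpace 𝓧] (μ ν : Measure 𝓧) : ℝ≥0∞ :=
  if μ ≪ ν ∧ Integrable (fun x ↦ Real.log (μ.rnDeriv ν x).toReal) μ then
    ENNReal.ofReal (∫ x, Real.log (μ.rnDeriv ν x).toReal ∂μ)
  else ∞

/-- **Conditioning increases the Kullback-Leibler divergence.** For a probability measure `μ`
on `𝓧`, a standard Borel space `𝓨` and Markov kernels `κ, η : 𝓧 ↝ 𝓨`,
`KL(κ ∘ₘ μ, η ∘ₘ μ) ≤ KL(μ ⊗ₘ κ, μ ⊗ₘ η)`, where `κ ∘ₘ μ = μ.bind κ`. -/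
lemma bind_eq_map_snd_compProd' {𝓧 𝓨 : Type*} [MeasurableSpace 𝓧] [MeasurableSpace 𝓨]
    (μ : Measure 𝓧) [SFinite μ] (κ : Kernel 𝓧 𝓨) [IsSFiniteKernel κ] :
    μ.bind κ = (μ ⊗ₘ κ).map Prod.snd := by
  ext s hs
  rw [Measure.map_apply measurable_snd hs, Measure.compProd_apply (measurable_snd hs),
    Measure.bind_apply hs κ.measurable.aemeasurable]
  congr 1

/-- key real inequality -/
lemma abs_log_le_aux {a b : ℝ} (ha : 0 < a) (hb : 0 < b) :
    |Real.log b| ≤ |Real.log a| + b / a + b⁻¹ := by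
  have h0 : 0 < b / a := div_pos hb ha
  have h1 : Real.log b = Real.log a + Real.log (b / a) := by
    rw [Real.log_div hb.ne' ha.ne']; ring
  have h2 : Real.log (b / a) ≤ b / a - 1 := Real.log_le_sub_one_of_pos h0
  have h3 : -Real.log b ≤ b⁻¹ - 1 := by
    rw [← Real.log_inv]; exact Real.log_le_sub_one_of_pos (inv_pos.mpr hb)
  have h4 : Real.log a ≤ |Real.log a| := le_abs_self _
  have h5 : -|Real.log a| ≤ Real.log a := neg_abs_le _
  have h6 : 0 < b⁻¹ := inv_pos.mpr hb
  rw [abs_le]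
  constructor <;> nlinarith


theorem klDiv_comp_le_compProd
    {𝓧 𝓨 : Type*} [MeasurableSpace 𝓧] [MeasurableSpace 𝓨]
    [StandardBorelSpace 𝓨] [Nonempty 𝓨]
    (μ : Measure 𝓧) [IsProbabilityMeasure μ]
    (κ η : Kernel 𝓧 𝓨) [IsMarkovKernel κ] [IsMarkovKernel η] :
    klDiv (μ.bind κ) (μ.bind η) ≤ klDiv (μ ⊗ₘ κ) (μ ⊗ₘ η) := by
  set P := μ ⊗ₘ κ with hP
  set Q := μ ⊗ₘ η with hQ
  by_cases hc : P ≪ Q ∧ Integrable (fun p ↦ Real.log (P.rnDeriv Q p).toReal) P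
  swap
  · have : klDiv P Q = ⊤ := by rw [klDiv, if_neg hc]
    rw [this]; exact le_top
  obtain ⟨hPQ, hint⟩ := hc
  have hmapκ : μ.bind κ = P.map Prod.snd := bind_eq_map_snd_compProd' μ κ
  have hmapη : μ.bind η = Q.map Prod.snd := bind_eq_map_snd_compProd' μ η
  have habs : μ.bind κ ≪ μ.bind η := by
    rw [hmapκ, hmapη]; exact hPQ.map measurable_snd
  have hprobκ : IsProbabilityMeasure (μ.bind κ) := by
    rw [hmapκ]; exact Measure.isProbabilityMeasure_map measurable_snd.aemeasurable
  have hprobη : IsProbabilityMeasure (μ.bind η) := by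
    rw [hmapη]; exact Measure.isProbabilityMeasure_map measurable_snd.aemeasurable
  set f : 𝓧 × 𝓨 → ℝ≥0∞ := P.rnDeriv Q with hf
  set g : 𝓨 → ℝ≥0∞ := (μ.bind κ).rnDeriv (μ.bind η) with hg
  have hfm : Measurable f := Measure.measurable_rnDeriv _ _
  have hgm : Measurable g := Measure.measurable_rnDeriv _ _
  set H : 𝓧 × 𝓨 → ℝ≥0∞ := fun p ↦ g p.2 / f p with hH
  have hHm : Measurable H := (hgm.comp measurable_snd).div hfm
  -- a.e. facts
  have hf_pos : ∀ᵐ p ∂P, 0 < f p := Measure.rnDeriv_pos hPQ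
  have hf_lt : ∀ᵐ p ∂P, f p < ∞ := hPQ.ae_le (Measure.rnDeriv_lt_top P Q)
  have hg_pos' : ∀ᵐ y ∂(μ.bind κ), 0 < g y := Measure.rnDeriv_pos habs
  have hg_lt' : ∀ᵐ y ∂(μ.bind κ), g y < ∞ :=
    habs.ae_le (Measure.rnDeriv_lt_top (μ.bind κ) (μ.bind η))
  have hg_pos : ∀ᵐ p ∂P, 0 < g p.2 := by
    rw [hmapκ] at hg_pos'; exact ae_of_ae_map measurable_snd.aemeasurable hg_pos'
  have hg_lt : ∀ᵐ p ∂P, g p.2 < ∞ := by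
    rw [hmapκ] at hg_lt'; exact ae_of_ae_map measurable_snd.aemeasurable hg_lt'
  -- integral bounds
  have hintH : ∫⁻ p, H p ∂P ≤ 1 := by
    calc ∫⁻ p, H p ∂P = ∫⁻ p, f p * H p ∂Q := by
          rw [← Measure.withDensity_rnDeriv_eq P Q hPQ,
            lintegral_withDensity_eq_lintegral_mul _ hfm hHm]
          rfl
      _ ≤ ∫⁻ p, g p.2 ∂Q := lintegral_mono fun p ↦ ENNReal.mul_div_le
      _ = ∫⁻ y, g y ∂(μ.bind η) := by
          rw [hmapη, lintegral_map hgm measurable_snd]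
      _ ≤ (μ.bind κ) Set.univ := Measure.lintegral_rnDeriv_le
      _ = 1 := measure_univ
  have hintGinv : ∫⁻ p, (g p.2)⁻¹ ∂P ≤ 1 := by
    calc ∫⁻ p, (g p.2)⁻¹ ∂P = ∫⁻ y, (g y)⁻¹ ∂(μ.bind κ) := by
          rw [hmapκ, lintegral_map (f := fun y ↦ (g y)⁻¹) hgm.inv measurable_snd]
      _ = ∫⁻ y, g y * (g y)⁻¹ ∂(μ.bind η) := by
          rw [← Measure.withDensity_rnDeriv_eq (μ.bind κ) (μ.bind η) habs,
            lintegral_withDensity_eq_lintegral_mul _ hgm (g := fun y ↦ (g y)⁻¹) hgm.inv]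
          rfl
      _ ≤ ∫⁻ _, 1 ∂(μ.bind η) := lintegral_mono fun y ↦ ENNReal.mul_inv_le_one _
      _ = 1 := by simp
  set φ : 𝓧 × 𝓨 → ℝ := fun p ↦ Real.log (f p).toReal with hφ
  set ψ : 𝓧 × 𝓨 → ℝ := fun p ↦ Real.log (g p.2).toReal with hψ
  have hψm : Measurable ψ :=
    Real.measurable_log.comp (ENNReal.measurable_toReal.comp (hgm.comp measurable_snd))
  have hψ'm : Measurable fun y ↦ Real.log (g y).toReal :=
    Real.measurable_log.comp (ENNReal.measurable_toReal.comp hgm)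
  have hae : ∀ᵐ p ∂P, 0 < (f p).toReal ∧ 0 < (g p.2).toReal ∧
      (H p).toReal = (g p.2).toReal / (f p).toReal ∧ H p < ∞ := by
    filter_upwards [hf_pos, hf_lt, hg_pos, hg_lt] with p h1 h2 h3 h4
    exact ⟨ENNReal.toReal_pos h1.ne' h2.ne, ENNReal.toReal_pos h3.ne' h4.ne,
      ENNReal.toReal_div _ _, ENNReal.div_lt_top h4.ne h1.ne'⟩
  have hHint : Integrable (fun p ↦ (H p).toReal) P :=
    integrable_toReal_of_lintegral_ne_top hHm.aemeasurable
      (lt_of_le_of_lt hintH ENNReal.one_lt_top).ne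
  have hGint : Integrable (fun p ↦ ((g p.2)⁻¹).toReal) P :=
    integrable_toReal_of_lintegral_ne_top ((hgm.comp measurable_snd).inv).aemeasurable
      (lt_of_le_of_lt hintGinv ENNReal.one_lt_top).ne
  have hψint : Integrable ψ P := by
    refine Integrable.mono' ((hint.abs.add hHint).add hGint) hψm.aestronglyMeasurable ?_
    filter_upwards [hae] with p hp
    obtain ⟨ha, hb, hHre, -⟩ := hp
    have key := abs_log_le_aux ha hb
    have hinv : ((g p.2)⁻¹).toReal = ((g p.2).toReal)⁻¹ := ENNReal.toReal_inv _
    simp only [Real.norm_eq_abs, hψ, hφ, Pi.add_apply]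
    rw [hHre, hinv]
    exact key
  have hψ'int : Integrable (fun y ↦ Real.log (g y).toReal) (μ.bind κ) := by
    rw [hmapκ]
    exact (integrable_map_measure hψ'm.aestronglyMeasurable
      measurable_snd.aemeasurable).mpr hψint
  -- key inequality
  have hH_lt : ∀ᵐ p ∂P, H p < ∞ := hae.mono fun p hp ↦ hp.2.2.2
  have hHint_le : ∫ p, (H p).toReal ∂P ≤ 1 := by
    rw [integral_toReal hHm.aemeasurable hH_lt]
    calc (∫⁻ p, H p ∂P).toReal ≤ (1 : ℝ≥0∞).toReal :=
          ENNReal.toReal_mono ENNReal.one_ne_top hintH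
      _ = 1 := by simp
  have hsub : ∫ p, (ψ p - φ p) ∂P ≤ 0 := by
    have hb : ∀ᵐ p ∂P, ψ p - φ p ≤ (H p).toReal - 1 := by
      filter_upwards [hae] with p hp
      obtain ⟨ha, hb, hHre, -⟩ := hp
      have heq : ψ p - φ p = Real.log ((H p).toReal) := by
        rw [hHre, Real.log_div hb.ne' ha.ne']
      rw [heq]
      exact Real.log_le_sub_one_of_pos (by rw [hHre]; positivity)
    calc ∫ p, (ψ p - φ p) ∂P ≤ ∫ p, ((H p).toReal - 1) ∂P :=
          integral_mono_ae (hψint.sub hint) (hHint.sub (integrable_const 1)) hb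
      _ = (∫ p, (H p).toReal ∂P) - 1 := by
          rw [integral_sub hHint (integrable_const 1), integral_const]; simp
      _ ≤ 0 := by linarith
  rw [integral_sub hψint hint] at hsub
  have hkey : ∫ y, Real.log (g y).toReal ∂(μ.bind κ) ≤ ∫ p, φ p ∂P := by
    rw [hmapκ, integral_map measurable_snd.aemeasurable hψ'm.aestronglyMeasurable]
    exact le_of_sub_nonpos hsub
  have hL : klDiv (μ.bind κ) (μ.bind η)
      = ENNReal.ofReal (∫ y, Real.log (g y).toReal ∂(μ.bind κ)) := by
    rw [klDiv, if_pos ⟨habs, hψ'int⟩]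
  have hR : klDiv P Q = ENNReal.ofReal (∫ p, φ p ∂P) := by
    rw [klDiv, if_pos ⟨hPQ, hint⟩]
  rw [hL, hR]
  exact ENNReal.ofReal_le_ofReal hkey
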